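/- arXiv:2605.24668 — 3 statements merged into one kernel-verified Lean document; each statement's English description precedes it below -/
import Mathlib

section
/- Let λ₁,…,λₙ be real numbers with ∑ᵢ λᵢ = 0, and set Θ(t) = ∑ᵢ arctan(λᵢ/t) for t > 0. Then ∑ᵢ λᵢ·|λᵢ| = −(4/π)·∫₀^∞ t·Θ(t) dt, and this integral is absolutely convergent. -/
open MeasureTheory Set Real Filter

lemma arctan_le_self' {u : ℝ} (hu : 0 ≤ u) : arctan u ≤ u := by
  have hmono : Monotone (fun u : ℝ => u - arctan u) := by
    have hd : ∀ x : ℝ, HasDerivAt (fun u : ℝ => u - arctan u) (1 - 1 / (1 + x ^ 2)) x :=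
      fun x => (hasDerivAt_id x).sub (hasDerivAt_arctan x)
    apply monotone_of_deriv_nonneg
    · exact fun x => ((hd x).differentiableAt)
    · intro x
      rw [(hd x).deriv]
      have h1 : (0:ℝ) < 1 + x ^ 2 := by positivity
      have : 1 / (1 + x ^ 2) ≤ 1 := by
        rw [div_le_one h1]; nlinarith
      linarith
  have h := hmono hu
  simp only [arctan_zero, sub_zero] at h
  linarith

lemma le_arctan' {u : ℝ} (hu : 0 ≤ u) : u - u ^ 3 / 3 ≤ arctan u := by
  have hmono : Monotone (fun u : ℝ => arctan u - u + u ^ 3 / 3) := by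
    have hd : ∀ x : ℝ, HasDerivAt (fun u : ℝ => arctan u - u + u ^ 3 / 3)
        (1 / (1 + x ^ 2) - 1 + 3 * x ^ 2 / 3) x := by
      intro x
      exact ((hasDerivAt_arctan x).sub (hasDerivAt_id x)).add
        (((hasDerivAt_pow 3 x).div_const 3).congr_deriv (by ring))
    apply monotone_of_deriv_nonneg
    · exact fun x => ((hd x).differentiableAt)
    · intro x
      rw [(hd x).deriv]
      have h1 : (0:ℝ) < 1 + x ^ 2 := by positivity
      have h2 : 1 - x ^ 2 ≤ 1 / (1 + x ^ 2) := by
        rw [le_div_iff₀ h1]; nlinarith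
      linarith
  have h := hmono hu
  simp only [arctan_zero] at h
  linarith

lemma keyPos {l : ℝ} (hl : 0 < l) :
    IntegrableOn (fun t : ℝ => t * arctan (l / t) - l) (Ioi 0) ∧
    ∫ t in Ioi (0:ℝ), (t * arctan (l / t) - l) = -(π / 4) * l ^ 2 := by
  set G : ℝ → ℝ := fun t => t ^ 2 / 2 * arctan (l / t) - l * t / 2 - l ^ 2 / 2 * arctan (t / l)
    with hG
  have hderiv : ∀ x ∈ Ioi (0:ℝ), HasDerivAt G (x * arctan (l / x) - l) x := by
    intro x hx
    have hx0 : x ≠ 0 := ne_of_gt hx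
    have hl0 : l ≠ 0 := ne_of_gt hl
    have h1 : HasDerivAt (fun t : ℝ => arctan (l / t)) (-(l / x ^ 2) / (1 + (l / x) ^ 2)) x := by
      have := ((hasDerivAt_const x l).div (hasDerivAt_id x) hx0).arctan
      simpa using this.congr_deriv (by simp only [Pi.div_apply, id_eq]; field_simp; ring)
    have h2 : HasDerivAt (fun t : ℝ => arctan (t / l)) ((1 / l) / (1 + (x / l) ^ 2)) x := by
      have h := ((hasDerivAt_id x).div_const l).arctan
      simp only [id_eq] at h
      exact h.congr_deriv (by ring)
    have h3 : HasDerivAt G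
        (x * arctan (l / x) + x ^ 2 / 2 * (-(l / x ^ 2) / (1 + (l / x) ^ 2)) - l / 2
          - l ^ 2 / 2 * ((1 / l) / (1 + (x / l) ^ 2))) x := by
      have ha : HasDerivAt (fun t : ℝ => t ^ 2 / 2 * arctan (l / t))
          (x * arctan (l / x) + x ^ 2 / 2 * (-(l / x ^ 2) / (1 + (l / x) ^ 2))) x := by
        have := ((hasDerivAt_pow 2 x).div_const 2).mul h1
        exact this.congr_deriv (by push_cast; ring)
      have hb : HasDerivAt (fun t : ℝ => l * t / 2) (l / 2) x := by
        simpa using (((hasDerivAt_id x).const_mul l).div_const 2).congr_deriv (by ring)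
      have hc : HasDerivAt (fun t : ℝ => l ^ 2 / 2 * arctan (t / l))
          (l ^ 2 / 2 * ((1 / l) / (1 + (x / l) ^ 2))) x := h2.const_mul _
      exact (ha.sub hb).sub hc
    refine h3.congr_deriv ?_
    have hxl : x ^ 2 + l ^ 2 ≠ 0 := by positivity
    field_simp
    ring
  have g'neg : ∀ x ∈ Ioi (0:ℝ), x * arctan (l / x) - l ≤ 0 := by
    intro x hx
    have hx : (0:ℝ) < x := hx
    have h := arctan_le_self' (le_of_lt (div_pos hl hx))
    have := mul_le_mul_of_nonneg_left h (le_of_lt hx)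
    rw [mul_div_cancel₀ _ (ne_of_gt hx)] at this
    linarith
  have hcont : ContinuousWithinAt G (Ici (0:ℝ)) 0 := by
    have hb : Tendsto (fun t : ℝ => t ^ 2 / 2 * arctan (l / t)) (nhdsWithin 0 (Ici 0)) (nhds 0) := by
      have hbound : ∀ t : ℝ, ‖t ^ 2 / 2 * arctan (l / t)‖ ≤ t ^ 2 / 2 * (π / 2) := by
        intro t
        calc ‖t ^ 2 / 2 * arctan (l / t)‖ = t ^ 2 / 2 * |arctan (l / t)| := by
              rw [norm_mul, Real.norm_eq_abs, Real.norm_eq_abs, abs_of_nonneg (by positivity)]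
          _ ≤ t ^ 2 / 2 * (π / 2) := by
              gcongr
              have h1 := (arctan_mem_Ioo (l / t)).1
              have h2 := (arctan_mem_Ioo (l / t)).2
              rw [abs_le]; constructor <;> linarith
      have htend : Tendsto (fun t : ℝ => t ^ 2 / 2 * (π / 2)) (nhdsWithin 0 (Ici 0)) (nhds 0) := by
        have hcont2 : Continuous (fun t : ℝ => t ^ 2 / 2 * (π / 2)) := by continuity
        have h0 := hcont2.continuousWithinAt (s := Ici (0:ℝ)) (x := (0:ℝ))
        simpa [ContinuousWithinAt] using h0
      exact squeeze_zero_norm hbound htend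
    have hc : Tendsto (fun t : ℝ => l * t / 2 + l ^ 2 / 2 * arctan (t / l))
        (nhdsWithin 0 (Ici 0)) (nhds 0) := by
      have : Continuous (fun t : ℝ => l * t / 2 + l ^ 2 / 2 * arctan (t / l)) := by
        continuity
      have h0 := this.continuousWithinAt (s := Ici (0:ℝ)) (x := (0:ℝ))
      simpa [ContinuousWithinAt] using h0
    have := hb.sub hc
    have hG0 : G 0 = 0 := by simp [hG]
    rw [ContinuousWithinAt, hG0]
    refine Tendsto.congr (fun t => ?_) (by simpa using this)
    simp [hG]; ring
  have hlim : Tendsto G atTop (nhds (-(π / 4) * l ^ 2)) := by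
    have h1 : Tendsto (fun t : ℝ => t / 2 * (t * arctan (l / t) - l)) atTop (nhds 0) := by
      apply tendsto_of_tendsto_of_tendsto_of_le_of_le' (g := fun t : ℝ => -(l ^ 3 / (6 * t)))
        (h := fun _ => (0:ℝ))
      · have : Tendsto (fun t : ℝ => l ^ 3 / (6 * t)) atTop (nhds 0) := by
          apply Tendsto.div_atTop tendsto_const_nhds
          exact Tendsto.const_mul_atTop (by norm_num) tendsto_id
        simpa using this.neg
      · exact tendsto_const_nhds
      · filter_upwards [eventually_gt_atTop (0:ℝ)] with t ht
        have h := le_arctan' (le_of_lt (div_pos hl ht))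
        have h2 : l - l ^ 3 / (3 * t ^ 2) ≤ t * arctan (l / t) := by
          have := mul_le_mul_of_nonneg_left h (le_of_lt ht)
          calc l - l ^ 3 / (3 * t ^ 2) = t * (l / t - (l / t) ^ 3 / 3) := by
                field_simp
            _ ≤ t * arctan (l / t) := this
        have h3 : -(l ^ 3 / (6 * t)) = t / 2 * (-(l ^ 3 / (3 * t ^ 2))) := by
          field_simp; ring
        rw [h3]
        apply mul_le_mul_of_nonneg_left _ (by linarith)
        linarith
      · filter_upwards [eventually_gt_atTop (0:ℝ)] with t ht
        have := g'neg t ht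
        have h4 := mul_le_mul_of_nonneg_left this (by linarith : (0:ℝ) ≤ t / 2)
        simpa using h4
    have h2 : Tendsto (fun t : ℝ => l ^ 2 / 2 * arctan (t / l)) atTop
        (nhds (l ^ 2 / 2 * (π / 2))) := by
      apply Tendsto.const_mul
      have ha : Tendsto (fun t : ℝ => t / l) atTop atTop :=
        Tendsto.atTop_div_const hl tendsto_id
      exact (tendsto_nhds_of_tendsto_nhdsWithin tendsto_arctan_atTop).comp ha
    have := h1.sub h2
    refine Tendsto.congr (fun t => ?_) (by convert this using 2; ring)
    simp [hG]; ring
  constructor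
  · exact integrableOn_Ioi_deriv_of_nonpos hcont hderiv g'neg hlim
  · rw [integral_Ioi_of_hasDerivAt_of_nonpos hcont hderiv g'neg hlim]
    simp [hG]

lemma keyGen (l : ℝ) :
    IntegrableOn (fun t : ℝ => t * arctan (l / t) - l) (Ioi 0) ∧
    ∫ t in Ioi (0:ℝ), (t * arctan (l / t) - l) = -(π / 4) * (l * |l|) := by
  rcases lt_trichotomy l 0 with hl | hl | hl
  · obtain ⟨hint, hval⟩ := keyPos (l := -l) (by linarith)
    have heq : (fun t : ℝ => t * arctan (l / t) - l)
        = fun t => -(t * arctan (-l / t) - -l) := by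
      funext t
      have : arctan (l / t) = -arctan (-l / t) := by
        rw [← arctan_neg]; ring_nf
      rw [this]; ring
    constructor
    · rw [heq]; exact hint.neg
    · rw [heq, integral_neg, hval, abs_of_neg hl]; ring
  · subst hl
    constructor
    · have : (fun t : ℝ => t * arctan ((0:ℝ) / t) - 0) = fun _ => (0:ℝ) := by
        funext t; simp
      rw [this]
      exact integrableOn_zero
    · have : (fun t : ℝ => t * arctan ((0:ℝ) / t) - 0) = fun _ => (0:ℝ) := by
        funext t; simp
      simp only [this]
      simp
  · obtain ⟨hint, hval⟩ := keyPos hl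
    refine ⟨hint, ?_⟩
    rw [hval, abs_of_pos hl]; ring

/-- Coulson-type identity: if `∑ i, λ i = 0` and `Θ(t) = ∑ i, arctan (λ i / t)`, then
`∑ i, λ i * |λ i| = -(4/π) ∫₀^∞ t Θ(t) dt`, the integral being absolutely convergent. -/
theorem coulson_type_identity {n : ℕ} (l : Fin n → ℝ) (hsum : ∑ i, l i = 0) :
    IntegrableOn (fun t : ℝ => t * ∑ i, arctan (l i / t)) (Ioi 0) ∧
    ∑ i, l i * |l i| =
      -(4 / π) * ∫ t in Ioi (0 : ℝ), t * ∑ i, arctan (l i / t) := by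
  have heq : (fun t : ℝ => t * ∑ i, arctan (l i / t))
      = fun t => ∑ i, (t * arctan (l i / t) - l i) := by
    funext t
    rw [Finset.sum_sub_distrib, hsum, sub_zero, Finset.mul_sum]
  have hint : IntegrableOn (fun t : ℝ => t * ∑ i, arctan (l i / t)) (Ioi 0) := by
    rw [heq]
    exact integrable_finset_sum _ (fun i _ => (keyGen (l i)).1)
  refine ⟨hint, ?_⟩
  have hval : ∫ t in Ioi (0:ℝ), t * ∑ i, arctan (l i / t)
      = -(π / 4) * ∑ i, l i * |l i| := by
    rw [heq, integral_finset_sum _ (fun i _ => (keyGen (l i)).1)]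
    rw [Finset.mul_sum]
    exact Finset.sum_congr rfl (fun i _ => by rw [(keyGen (l i)).2])
  rw [hval]
  have hpi : (π : ℝ) ≠ 0 := Real.pi_ne_zero
  field_simp
end

section
/- For an odd cycle C_k, s⁺(C_k) − s⁻(C_k) = 2(sec(π/k) − 1) if k ≡ 3 (mod 4), and s⁺(C_k) − s⁻(C_k) = −2(sec(π/k) − 1) if k ≡ 1 (mod 4). -/
variable {V : Type*}

/-- Number of matchings of size `j` in `H` (sets of `j` pairwise vertex-disjoint edges). -/
noncomputable def mcount (H : SimpleGraph V) (j : ℕ) : ℕ :=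
  Set.ncard {M : Finset (Sym2 V) | (∀ e ∈ M, e ∈ H.edgeSet) ∧ M.card = j ∧
    ∀ e ∈ M, ∀ f ∈ M, e ≠ f → ∀ v : V, ¬(v ∈ e ∧ v ∈ f)}

/-- The matching polynomial of `H`, as a function on `ℂ`. -/
noncomputable def matchPolyFun [Fintype V] (H : SimpleGraph V) (x : ℂ) : ℂ :=
  ∑ j ∈ Finset.range (Fintype.card V / 2 + 1),
    (-1 : ℂ) ^ j * (mcount H j : ℂ) * x ^ (Fintype.card V - 2 * j)

/-- The characteristic polynomial `det (x • 1 - A(G))` of the adjacency matrix, as a function. -/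
noncomputable def charFun [Fintype V] [DecidableEq V] (G : SimpleGraph V)
    [DecidableRel G.Adj] (x : ℂ) : ℂ :=
  (x • (1 : Matrix V V ℂ) - G.adjMatrix ℂ).det

/-- The adjacency matrix of a graph is Hermitian (symmetric). -/
theorem adjHerm [Fintype V] [DecidableEq V] (G : SimpleGraph V) [DecidableRel G.Adj] :
    (G.adjMatrix ℝ).IsHermitian := by
  rw [Matrix.IsHermitian, Matrix.conjTranspose_eq_transpose_of_trivial]
  exact SimpleGraph.isSymm_adjMatrix G

/-- Positive square energy. -/
noncomputable def sPlus [Fintype V] [DecidableEq V] (G : SimpleGraph V) [DecidableRel G.Adj] : ℝ :=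
  ∑ i, if 0 < (adjHerm G).eigenvalues i then ((adjHerm G).eigenvalues i) ^ 2 else 0

/-- Negative square energy. -/
noncomputable def sMinus [Fintype V] [DecidableEq V] (G : SimpleGraph V) [DecidableRel G.Adj] : ℝ :=
  ∑ i, if (adjHerm G).eigenvalues i < 0 then ((adjHerm G).eigenvalues i) ^ 2 else 0

open Real



open Matrix

lemma det_smul_one_sub_conj {n : Type*} [Fintype n] [DecidableEq n]
    (P Q B : Matrix n n ℂ) (h : P * Q = 1) (x : ℂ) :
    (x • (1 : Matrix n n ℂ) - P * B * Q).det = (x • 1 - B).det := by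
  have key : x • (1 : Matrix n n ℂ) - P * B * Q = P * (x • 1 - B) * Q := by
    rw [Matrix.mul_sub, Matrix.sub_mul, Matrix.mul_smul, Matrix.mul_one, Matrix.smul_mul, h]
  have h2 : P.det * Q.det = 1 := by rw [← Matrix.det_mul, h, Matrix.det_one]
  rw [key, Matrix.det_mul, Matrix.det_mul]
  calc P.det * (x • 1 - B).det * Q.det = (P.det * Q.det) * (x • (1:Matrix n n ℂ) - B).det := by ring
  _ = (x • 1 - B).det := by rw [h2, one_mul]

lemma det_diag_eig {V : Type*} [Fintype V] [DecidableEq V] {A : Matrix V V ℝ}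
    (hA : A.IsHermitian) (x : ℂ) :
    (x • (1 : Matrix V V ℂ) - A.map Complex.ofRealHom).det
      = ∏ i, (x - (hA.eigenvalues i : ℂ)) := by
  have hU : (hA.eigenvectorUnitary : Matrix V V ℝ) * star (hA.eigenvectorUnitary : Matrix V V ℝ) = 1 :=
    Matrix.mem_unitaryGroup_iff.mp hA.eigenvectorUnitary.2
  have hspec := hA.spectral_theorem
  have hmap : A.map Complex.ofRealHom
      = ((hA.eigenvectorUnitary : Matrix V V ℝ).map Complex.ofRealHom)
        * ((Matrix.diagonal (RCLike.ofReal ∘ hA.eigenvalues) : Matrix V V ℝ).map Complex.ofRealHom)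
        * ((star (hA.eigenvectorUnitary : Matrix V V ℝ)).map Complex.ofRealHom) := by
    conv_lhs => rw [hspec, Unitary.conjStarAlgAut_apply]
    rw [Matrix.map_mul, Matrix.map_mul]
  have hPQ : ((hA.eigenvectorUnitary : Matrix V V ℝ).map Complex.ofRealHom)
      * ((star (hA.eigenvectorUnitary : Matrix V V ℝ)).map Complex.ofRealHom) = 1 := by
    rw [← Matrix.map_mul, hU, Matrix.map_one _ (map_zero _) (map_one _)]
  rw [hmap, det_smul_one_sub_conj _ _ _ hPQ]
  have hdiag : ((Matrix.diagonal (RCLike.ofReal ∘ hA.eigenvalues) : Matrix V V ℝ).map Complex.ofRealHom)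
      = Matrix.diagonal (fun i => (hA.eigenvalues i : ℂ)) := by
    rw [Matrix.diagonal_map (map_zero _)]
    congr 1
  rw [hdiag]
  have : x • (1 : Matrix V V ℂ) - Matrix.diagonal (fun i => (hA.eigenvalues i : ℂ))
      = Matrix.diagonal (fun i => x - (hA.eigenvalues i : ℂ)) := by
    rw [Matrix.smul_one_eq_diagonal, Matrix.diagonal_sub]
  rw [this, Matrix.det_diagonal]
open Matrix Real

noncomputable def lamR (n : ℕ) (a : ℕ) : ℝ := 2 * Real.cos (2 * π * a / (n + 2))

lemma det_smul_one_sub_conj' {m : Type*} [Fintype m] [DecidableEq m]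
    (P Q B : Matrix m m ℂ) (h : P * Q = 1) (x : ℂ) :
    (x • (1 : Matrix m m ℂ) - P * B * Q).det = (x • 1 - B).det := by
  have key : x • (1 : Matrix m m ℂ) - P * B * Q = P * (x • 1 - B) * Q := by
    rw [Matrix.mul_sub, Matrix.sub_mul, Matrix.mul_smul, Matrix.mul_one, Matrix.smul_mul, h]
  have h2 : P.det * Q.det = 1 := by rw [← Matrix.det_mul, h, Matrix.det_one]
  rw [key, Matrix.det_mul, Matrix.det_mul]
  calc P.det * (x • 1 - B).det * Q.det = (P.det * Q.det) * (x • (1:Matrix m m ℂ) - B).det := by ring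
  _ = (x • 1 - B).det := by rw [h2, one_mul]

lemma cycle_det (n : ℕ) (hodd : Odd (n + 2)) (x : ℂ) :
    (x • (1 : Matrix (Fin (n+2)) (Fin (n+2)) ℂ) - (SimpleGraph.cycleGraph (n+2)).adjMatrix ℂ).det
      = ∏ j : Fin (n+2), (x - ((lamR n j : ℝ) : ℂ)) := by
  have hn1 : 1 ≤ n := by rcases hodd with ⟨t, ht⟩; omega
  have hk0 : (n + 2 : ℕ) ≠ 0 := by omega
  set ζ : ℂ := Complex.exp (2 * ↑Real.pi * Complex.I / (↑(n+2) : ℂ)) with hζdef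
  have hprim : IsPrimitiveRoot ζ (n+2) := Complex.isPrimitiveRoot_exp (n+2) hk0
  have hζk : ζ ^ (n+2) = 1 := hprim.pow_eq_one
  have hmod : ∀ a : ℕ, ζ ^ a = ζ ^ (a % (n+2)) := by
    intro a
    conv_lhs => rw [← Nat.div_add_mod a (n+2)]
    rw [pow_add, pow_mul, hζk, one_pow, one_mul]
  have hexp : ∀ a : ℕ, ζ ^ a = Complex.exp (((2 * π * a / (n+2) : ℝ) : ℂ) * Complex.I) := by
    intro a
    rw [← Complex.exp_nat_mul]
    congr 1
    push_cast
    ring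
  have hlam : ∀ a : ℕ, ζ ^ a + ζ ^ ((n+1) * a) = ((lamR n a : ℝ) : ℂ) := by
    intro a
    have h1 : ζ ^ ((n+1) * a) = (ζ ^ a)⁻¹ := by
      apply eq_inv_of_mul_eq_one_left
      rw [← pow_add]
      have : (n+1) * a + a = (n+2) * a := by ring
      rw [this, pow_mul, hζk, one_pow]
    have h2 : (ζ ^ a)⁻¹ = (starRingEnd ℂ) (ζ ^ a) := by
      apply Complex.inv_eq_conj
      rw [hexp a]
      exact Complex.norm_exp_ofReal_mul_I _
    have h3 : (ζ ^ a).re = Real.cos (2 * π * a / (n+2)) := by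
      rw [hexp a]; exact Complex.exp_ofReal_mul_I_re _
    rw [h1, h2, Complex.add_conj, h3]
    simp [lamR]
  set F : Matrix (Fin (n+2)) (Fin (n+2)) ℂ := Matrix.vandermonde (fun i : Fin (n+2) => ζ ^ (i : ℕ)) with hF
  have hdetF : F.det ≠ 0 := by
    rw [hF, Matrix.det_vandermonde]
    rw [Finset.prod_ne_zero_iff]
    intro i _
    rw [Finset.prod_ne_zero_iff]
    intro j hj
    rw [Finset.mem_Ioi] at hj
    rw [sub_ne_zero]
    intro heq
    have := hprim.pow_inj j.isLt i.isLt heq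
    exact absurd (Fin.val_injective this) hj.ne'
  set D : Matrix (Fin (n+2)) (Fin (n+2)) ℂ :=
    Matrix.diagonal (fun j : Fin (n+2) => ((lamR n j : ℝ) : ℂ)) with hD
  have hval1 : ∀ i : Fin (n+2), ((i + 1 : Fin (n+2)) : ℕ) = (i.val + 1) % (n+2) := by
    intro i
    rw [Fin.add_def]
    simp [Fin.val_one]
  have hval2 : ∀ i : Fin (n+2), ((i - 1 : Fin (n+2)) : ℕ) = (n + 1 + i.val) % (n+2) := by
    intro i
    rw [Fin.sub_def]
    simp [Fin.val_one]
  have hAF : (SimpleGraph.cycleGraph (n+2)).adjMatrix ℂ * F = F * D := by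
    ext i j
    rw [SimpleGraph.adjMatrix_mul_apply, Matrix.mul_diagonal]
    rw [SimpleGraph.cycleGraph_neighborFinset]
    have hne : (i - 1 : Fin (n+2)) ≠ i + 1 := by
      intro h
      have hv := congrArg Fin.val h
      rw [hval1, hval2] at hv
      have h1 : (n + 1 + i.val) % (n+2) = ((i.val + 1) + n) % (n+2) := by ring_nf
      have h2 : ((i.val + 1) + n) % (n+2) = (i.val + 1) % (n+2) → False := by
        intro hh
        have hmodeq : (i.val + 1 + n) ≡ (i.val + 1) [MOD n+2] := hh
        have := (Nat.modEq_iff_dvd' (by omega)).mp hmodeq.symm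
        have : (n+2) ∣ n := by simpa using this
        have := Nat.le_of_dvd (by omega) this
        omega
      exact h2 (h1 ▸ hv)
    rw [Finset.sum_pair hne]
    have hFa : ∀ u : Fin (n+2), F u j = ζ ^ ((u : ℕ) * (j : ℕ)) := by
      intro u
      rw [hF, Matrix.vandermonde_apply, ← pow_mul]
    rw [hFa, hFa, hFa]
    have e1 : ζ ^ (((i - 1 : Fin (n+2)) : ℕ) * (j : ℕ)) = ζ ^ ((n+1) * (j:ℕ)) * ζ ^ ((i:ℕ) * (j:ℕ)) := by
      rw [hval2, pow_mul, ← hmod, ← pow_mul]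
      have : (n + 1 + i.val) * (j:ℕ) = (n+1) * (j:ℕ) + (i:ℕ) * (j:ℕ) := by ring
      rw [this, pow_add]
    have e2 : ζ ^ (((i + 1 : Fin (n+2)) : ℕ) * (j : ℕ)) = ζ ^ ((j:ℕ)) * ζ ^ ((i:ℕ) * (j:ℕ)) := by
      rw [hval1, pow_mul, ← hmod, ← pow_mul]
      have : (i.val + 1) * (j:ℕ) = (j:ℕ) + (i:ℕ) * (j:ℕ) := by ring
      rw [this, pow_add]
    rw [e1, e2, ← hlam (j:ℕ)]
    ring
  have hFinv : F * F⁻¹ = 1 := Matrix.mul_nonsing_inv F (isUnit_iff_ne_zero.mpr hdetF)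
  have hAeq : (SimpleGraph.cycleGraph (n+2)).adjMatrix ℂ = F * D * F⁻¹ := by
    calc (SimpleGraph.cycleGraph (n+2)).adjMatrix ℂ
        = (SimpleGraph.cycleGraph (n+2)).adjMatrix ℂ * (F * F⁻¹) := by rw [hFinv, Matrix.mul_one]
      _ = ((SimpleGraph.cycleGraph (n+2)).adjMatrix ℂ * F) * F⁻¹ := by rw [Matrix.mul_assoc]
      _ = F * D * F⁻¹ := by rw [hAF]
  rw [hAeq, det_smul_one_sub_conj' _ _ _ hFinv]
  have : x • (1 : Matrix (Fin (n+2)) (Fin (n+2)) ℂ) - D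
      = Matrix.diagonal (fun j : Fin (n+2) => x - ((lamR n j : ℝ) : ℂ)) := by
    rw [hD, Matrix.smul_one_eq_diagonal, Matrix.diagonal_sub]
  rw [this, Matrix.det_diagonal]
open Matrix Polynomial

lemma adj_map {V : Type*} [Fintype V] [DecidableEq V] (G : SimpleGraph V) [DecidableRel G.Adj] :
    ((G.adjMatrix ℝ).map Complex.ofRealHom) = G.adjMatrix ℂ := by
  ext i j
  simp [Matrix.map_apply, SimpleGraph.adjMatrix_apply, apply_ite]

lemma sum_transfer {ι : Type*} [Fintype ι] (μ lam : ι → ℝ)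
    (hdet : ∀ x : ℂ, ∏ i, (x - (μ i : ℂ)) = ∏ j, (x - (lam j : ℂ))) (h : ℝ → ℝ) :
    ∑ i, h (μ i) = ∑ j, h (lam j) := by
  have hpq : (Multiset.map (fun a => X - C a) (Finset.univ.val.map (fun i => (μ i : ℂ)))).prod
      = (Multiset.map (fun a => X - C a) (Finset.univ.val.map (fun j => (lam j : ℂ)))).prod := by
    apply Polynomial.funext
    intro r
    rw [Polynomial.eval_multiset_prod, Polynomial.eval_multiset_prod]
    rw [Multiset.map_map, Multiset.map_map, Multiset.map_map, Multiset.map_map]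
    have e1 : ∀ (f : ι → ℝ),
        (Multiset.map ((eval r ∘ fun a => X - C a) ∘ fun i => ((f i : ℝ) : ℂ)) Finset.univ.val).prod
          = ∏ i, (r - ((f i : ℝ) : ℂ)) := by
      intro f
      rw [Finset.prod]
      congr 1
      apply Multiset.map_congr rfl
      intro i _
      simp
    rw [e1 μ, e1 lam]
    exact hdet r
  have hms : Finset.univ.val.map (fun i => ((μ i : ℝ) : ℂ))
      = Finset.univ.val.map (fun j => ((lam j : ℝ) : ℂ)) := by
    have := congrArg Polynomial.roots hpq
    rwa [Polynomial.roots_multiset_prod_X_sub_C, Polynomial.roots_multiset_prod_X_sub_C] at this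
  have key : ∀ (f : ι → ℝ), ∑ i, h (f i)
      = ((Finset.univ.val.map (fun i => ((f i : ℝ) : ℂ))).map (fun z : ℂ => h z.re)).sum := by
    intro f
    rw [Multiset.map_map, Finset.sum]
    congr 1
  rw [key μ, key lam, hms]
open Real Finset

lemma sum_d_zero (k : ℕ) (hk : 3 ≤ k) :
    ∑ j ∈ range k, Real.cos (4 * π * j / k) = 0 := by
  have hk0 : (k:ℝ) ≠ 0 := by positivity
  have hkc : (k:ℂ) ≠ 0 := by exact_mod_cast hk0
  set z : ℂ := Complex.exp (((4 * π / k : ℝ) : ℂ) * Complex.I) with hz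
  have hterm : ∀ j : ℕ, Real.cos (4 * π * j / k) = (z ^ j).re := by
    intro j
    rw [hz, ← Complex.exp_nat_mul]
    have : (j : ℂ) * (((4 * π / k : ℝ) : ℂ) * Complex.I) = ((4 * π * j / k : ℝ) : ℂ) * Complex.I := by
      push_cast; ring
    rw [this, Complex.exp_ofReal_mul_I_re]
  have hzk : z ^ k = 1 := by
    rw [hz, ← Complex.exp_nat_mul]
    have : (k : ℂ) * (((4 * π / k : ℝ) : ℂ) * Complex.I) = ((2:ℤ) : ℂ) * (2 * (π:ℝ) * Complex.I) := by
      push_cast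
      field_simp
      ring
    rw [this, Complex.exp_int_mul_two_pi_mul_I]
  have hz1 : z ≠ 1 := by
    rw [hz]
    intro h
    rw [Complex.exp_eq_one_iff] at h
    obtain ⟨m, hm⟩ := h
    have h2 : ((4 * π / k : ℝ) : ℂ) = (((m:ℝ) * (2 * π) : ℝ) : ℂ) := by
      apply mul_right_cancel₀ Complex.I_ne_zero
      rw [hm]; push_cast; ring
    have hr : 4 * π / k = (m:ℝ) * (2 * π) := by exact_mod_cast h2
    have hr2 : 4 * π = (m:ℝ) * (2 * π) * k := by
      field_simp at hr
      linear_combination π * hr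
    have key : (2*π) * ((m:ℝ) * k) = (2*π) * 2 := by linear_combination -hr2
    have h2pi : (2*π : ℝ) ≠ 0 := by positivity
    have hmk : (m:ℝ) * k = 2 := mul_left_cancel₀ h2pi key
    have hmk' : m * (k:ℤ) = 2 := by exact_mod_cast hmk
    have hdvd : (k:ℤ) ∣ 2 := ⟨m, by rw [← hmk']; ring⟩
    have := Int.le_of_dvd (by norm_num) hdvd
    have hk3 : (3:ℤ) ≤ (k:ℤ) := by exact_mod_cast hk
    omega
  have hsum : ∑ j ∈ range k, z ^ j = 0 := by
    rw [geom_sum_eq hz1, hzk]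
    simp
  calc ∑ j ∈ range k, Real.cos (4 * π * j / k) = ∑ j ∈ range k, (z ^ j).re :=
        Finset.sum_congr rfl fun j _ => hterm j
    _ = (∑ j ∈ range k, z ^ j).re := (Complex.re_sum _ _).symm
    _ = 0 := by rw [hsum]; rfl

lemma sum_cos_tel (φ : ℝ) (m : ℕ) :
    2 * Real.sin (φ/2) * (∑ j ∈ range m, Real.cos ((j+1) * φ))
      = Real.sin ((2*m+1) * φ/2) - Real.sin (φ/2) := by
  have key : ∀ j : ℕ, 2 * Real.sin (φ/2) * Real.cos (((j:ℝ)+1) * φ)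
      = Real.sin ((2*((j:ℝ)+1)+1) * φ/2) - Real.sin ((2*(j:ℝ)+1) * φ/2) := by
    intro j
    have e1 : (2*((j:ℝ)+1)+1) * φ/2 = (((j:ℝ)+1) * φ) + φ/2 := by ring
    have e2 : (2*(j:ℝ)+1) * φ/2 = (((j:ℝ)+1) * φ) - φ/2 := by ring
    rw [e1, e2, Real.sin_add, Real.sin_sub]
    ring
  rw [Finset.mul_sum]
  have hcongr : ∀ j ∈ range m, 2 * Real.sin (φ/2) * Real.cos (((j:ℝ)+1) * φ)
      = (fun i : ℕ => Real.sin ((2*(i:ℝ)+1) * φ/2)) (j+1)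
        - (fun i : ℕ => Real.sin ((2*(i:ℝ)+1) * φ/2)) j := by
    intro j _
    rw [key j]
    simp only []
    congr 2
    push_cast
    ring
  rw [Finset.sum_congr rfl hcongr, Finset.sum_range_sub (fun i : ℕ => Real.sin ((2*(i:ℝ)+1) * φ/2)) m]
  norm_num
open Real Finset

lemma trig_shared (k m : ℕ) (hk3 : 3 ≤ k) (h1 : 4*m < k) (h2 : k < 4*m+4) :
    ∑ j ∈ range k, ((if 0 < 2*Real.cos (2*π*j/k) then (2*Real.cos (2*π*j/k))^2 else 0)
       - (if 2*Real.cos (2*π*j/k) < 0 then (2*Real.cos (2*π*j/k))^2 else 0))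
    = 8 + 8*m + 8*(∑ j ∈ range m, Real.cos ((j+1) * (4*π/k))) - 2*k := by
  have hπ := Real.pi_pos
  have hk0 : (0:ℝ) < k := by exact_mod_cast (by omega : 0 < k)
  set c : ℕ → ℝ := fun j => Real.cos (2*π*j/k) with hc
  set d : ℕ → ℝ := fun j => Real.cos (4*π*j/k) with hd
  set t : ℕ → ℝ := fun j => (if 0 < 2*c j then (2*c j)^2 else 0) - (if 2*c j < 0 then (2*c j)^2 else 0) with ht
  set g : ℕ → ℝ := fun j => 2 + 2 * d j with hg
  have hsq : ∀ j : ℕ, (2 * c j)^2 = g j := by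
    intro j
    rw [hc, hg, hd]
    simp only []
    have h2 : (2:ℝ)*(2*π*j/k) = 4*π*j/k := by ring
    have := Real.cos_sq (2*π*j/k)
    rw [h2] at this
    nlinarith [this]
  have hpos : ∀ j : ℕ, 0 < c j → t j = g j := by
    intro j hj
    rw [ht]
    simp only []
    rw [if_pos (by linarith), if_neg (by linarith), hsq j]
    ring
  have hneg : ∀ j : ℕ, c j < 0 → t j = -g j := by
    intro j hj
    rw [ht]
    simp only []
    rw [if_neg (by linarith), if_pos (by linarith), hsq j]
    ring
  have hposj : ∀ j : ℕ, 4*j < k → 0 < c j := by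
    intro j hj
    rw [hc]
    apply Real.cos_pos_of_mem_Ioo
    constructor
    · have : (0:ℝ) ≤ 2*π*j/k := by positivity
      linarith
    · rw [div_lt_iff₀ hk0]
      have hj' : (4*(j:ℝ)) < k := by exact_mod_cast hj
      nlinarith
  have hnegj : ∀ j : ℕ, k < 4*j → 4*j < 3*k → c j < 0 := by
    intro j hj1 hj2
    rw [hc]
    apply Real.cos_neg_of_pi_div_two_lt_of_lt
    · rw [lt_div_iff₀ hk0]
      have : (k:ℝ) < 4*j := by exact_mod_cast hj1
      nlinarith
    · rw [div_lt_iff₀ hk0]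
      have : (4*(j:ℝ)) < 3*k := by exact_mod_cast hj2
      nlinarith
  have hrefl2 : ∀ j : ℕ, j ≤ k → c (k - j) = c j := by
    intro j hj
    rw [hc]
    simp only []
    have hcast : ((k - j : ℕ) : ℝ) = (k:ℝ) - j := by
      rw [Nat.cast_sub hj]
    rw [hcast]
    have : 2*π*((k:ℝ) - j)/k = 2*π - 2*π*j/k := by field_simp
    rw [this, Real.cos_two_pi_sub]
  have hrefl4 : ∀ j : ℕ, j ≤ k → d (k - j) = d j := by
    intro j hj
    rw [hd]
    simp only []
    have hcast : ((k - j : ℕ) : ℝ) = (k:ℝ) - j := by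
      rw [Nat.cast_sub hj]
    rw [hcast]
    have : 4*π*((k:ℝ) - j)/k = (-(4*π*j/k) + 2*π) + 2*π := by field_simp; ring
    rw [this, Real.cos_add_two_pi, Real.cos_add_two_pi, Real.cos_neg]
  -- the three pieces
  have hA1 : ∑ j ∈ range (m+1), t j = ∑ j ∈ range (m+1), g j := by
    apply Finset.sum_congr rfl
    intro j hj
    rw [mem_range] at hj
    exact hpos j (hposj j (by omega))
  have hB2 : ∑ j ∈ Ico (m+1) (k-m), t j = -∑ j ∈ Ico (m+1) (k-m), g j := by
    rw [← Finset.sum_neg_distrib]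
    apply Finset.sum_congr rfl
    intro j hj
    rw [mem_Ico] at hj
    exact hneg j (hnegj j (by omega) (by omega))
  have hA3 : ∑ j ∈ Ico (k-m) k, t j = ∑ j ∈ Ico (k-m) k, g j := by
    apply Finset.sum_congr rfl
    intro j hj
    rw [mem_Ico] at hj
    apply hpos
    have hjk : j ≤ k := by omega
    rw [← hrefl2 j hjk]
    exact hposj (k - j) (by omega)
  have hsplit : ∀ f : ℕ → ℝ, ∑ j ∈ range k, f j
      = ∑ j ∈ range (m+1), f j + ∑ j ∈ Ico (m+1) (k-m), f j + ∑ j ∈ Ico (k-m) k, f j := by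
    intro f
    rw [Finset.range_eq_Ico, ← Finset.sum_Ico_consecutive f (by omega : 0 ≤ m+1) (by omega : m+1 ≤ k)]
    rw [← Finset.sum_Ico_consecutive f (by omega : m+1 ≤ k-m) (by omega : k-m ≤ k)]
    rw [← Finset.range_eq_Ico]
    ring
  have hgtot : ∑ j ∈ range k, g j = 2*k := by
    rw [hg]
    simp only []
    rw [Finset.sum_add_distrib, ← Finset.mul_sum]
    rw [hd]
    simp only []
    rw [sum_d_zero k hk3]
    simp [mul_comm]
  have hA3' : ∑ j ∈ Ico (k-m) k, g j = ∑ j ∈ Ico 1 (m+1), g j := by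
    apply Finset.sum_nbij' (fun j => k - j) (fun j => k - j)
    · intro a ha; rw [mem_Ico] at *; omega
    · intro a ha; rw [mem_Ico] at *; omega
    · intro a ha; rw [mem_Ico] at ha; omega
    · intro a ha; rw [mem_Ico] at ha; omega
    · intro a ha
      rw [mem_Ico] at ha
      rw [hg]
      simp only []
      rw [hrefl4 a (by omega)]
  have hg0 : g 0 = 4 := by
    rw [hg, hd]
    norm_num
  have hQ : ∑ j ∈ range (m+1), g j = 4 + ∑ j ∈ Ico 1 (m+1), g j := by
    rw [Finset.range_eq_Ico, Finset.sum_eq_sum_Ico_succ_bot (by omega : 0 < m+1), hg0]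
  have hQval : ∑ j ∈ Ico 1 (m+1), g j = 2*m + 2*(∑ j ∈ range m, Real.cos ((j+1) * (4*π/k))) := by
    rw [Finset.sum_Ico_eq_sum_range]
    simp only [Nat.add_sub_cancel]
    have harg : ∀ j ∈ range m, g (1 + j) = 2 + 2 * Real.cos (((j:ℝ)+1) * (4*π/k)) := by
      intro j _
      rw [hg, hd]
      simp only []
      have : 4*π*((1+j:ℕ):ℝ)/k = ((j:ℝ)+1)*(4*π/k) := by push_cast; ring
      rw [this]
    rw [Finset.sum_congr rfl harg, Finset.sum_add_distrib, ← Finset.mul_sum]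
    simp [mul_comm]
  calc ∑ j ∈ range k, t j
      = ∑ j ∈ range (m+1), t j + ∑ j ∈ Ico (m+1) (k-m), t j + ∑ j ∈ Ico (k-m) k, t j := hsplit t
    _ = ∑ j ∈ range (m+1), g j + (-∑ j ∈ Ico (m+1) (k-m), g j) + ∑ j ∈ Ico 1 (m+1), g j := by
        rw [hA1, hB2, hA3, hA3']
    _ = 2*(∑ j ∈ range (m+1), g j + ∑ j ∈ Ico 1 (m+1), g j) - ∑ j ∈ range k, g j := by
        rw [hsplit g, hA3']
        ring
    _ = 2*(4 + (2*m + 2*(∑ j ∈ range m, Real.cos ((j+1) * (4*π/k)))) + (2*m + 2*(∑ j ∈ range m, Real.cos ((j+1) * (4*π/k))))) - 2*k := by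
        rw [hQ, hQval, hgtot]
    _ = 8 + 8*m + 8*(∑ j ∈ range m, Real.cos ((j+1) * (4*π/k))) - 2*k := by ring
open Real Finset

lemma trig_facts (k : ℕ) (hk3 : 3 ≤ k) :
    0 < Real.sin (π/k) ∧ 0 < Real.cos (π/k) := by
  have hπ := Real.pi_pos
  have hk0 : (0:ℝ) < k := by exact_mod_cast (by omega : 0 < k)
  have hk3' : (3:ℝ) ≤ k := by exact_mod_cast hk3
  constructor
  · apply Real.sin_pos_of_pos_of_lt_pi
    · positivity
    · rw [div_lt_iff₀ hk0]; nlinarith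
  · apply Real.cos_pos_of_mem_Ioo
    constructor
    · have : (0:ℝ) < π/k := by positivity
      linarith
    · rw [div_lt_iff₀ hk0]; nlinarith

lemma trig_caseA (k m : ℕ) (hA : k = 4*m+3) :
    ∑ j ∈ range k, ((if 0 < 2*Real.cos (2*π*j/k) then (2*Real.cos (2*π*j/k))^2 else 0)
       - (if 2*Real.cos (2*π*j/k) < 0 then (2*Real.cos (2*π*j/k))^2 else 0))
    = 2*(1/Real.cos (π/k) - 1) := by
  have hπ := Real.pi_pos
  have hk3 : 3 ≤ k := by omega
  have hk0 : (0:ℝ) < k := by exact_mod_cast (by omega : 0 < k)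
  obtain ⟨hs1, hc1⟩ := trig_facts k hk3
  rw [trig_shared k m hk3 (by omega) (by omega)]
  set RR := ∑ j ∈ range m, Real.cos ((j+1) * (4*π/k)) with hRR
  have htel := sum_cos_tel (4*π/k) m
  have h2k : (4*π/(k:ℝ))/2 = 2*π/k := by ring
  have harg : ((2*(m:ℝ)+1) * (4*π/k))/2 = π - π/k := by
    subst hA
    push_cast
    have hne : ((4:ℝ)*m+3) ≠ 0 := by positivity
    field_simp
    ring
  rw [h2k] at htel
  rw [show (2*(m:ℕ)+1 : ℝ) * (4*π/k)/2 = ((2*(m:ℝ)+1) * (4*π/k))/2 by push_cast; ring] at htel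
  rw [harg, Real.sin_pi_sub] at htel
  have hs2 : Real.sin (2*π/k) = 2*Real.sin (π/k)*Real.cos (π/k) := by
    rw [show 2*π/(k:ℝ) = 2*(π/k) by ring, Real.sin_two_mul]
  rw [hs2] at htel
  have h4 : 4*Real.cos (π/k)*RR = 1 - 2*Real.cos (π/k) :=
    mul_left_cancel₀ (ne_of_gt hs1) (by linear_combination htel)
  have hc1' : Real.cos (π/k) ≠ 0 := ne_of_gt hc1
  have hinv : 1/Real.cos (π/(k:ℝ)) = 4*RR + 2 := by
    rw [div_eq_iff hc1']
    linear_combination -h4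
  have hkcast : (k:ℝ) = 4*m+3 := by rw [hA]; push_cast; ring
  rw [hinv, hkcast]
  ring

lemma trig_caseB (k m : ℕ) (hB : k = 4*m+1) (hm : 1 ≤ m) :
    ∑ j ∈ range k, ((if 0 < 2*Real.cos (2*π*j/k) then (2*Real.cos (2*π*j/k))^2 else 0)
       - (if 2*Real.cos (2*π*j/k) < 0 then (2*Real.cos (2*π*j/k))^2 else 0))
    = -(2*(1/Real.cos (π/k) - 1)) := by
  have hπ := Real.pi_pos
  have hk3 : 3 ≤ k := by omega
  have hk0 : (0:ℝ) < k := by exact_mod_cast (by omega : 0 < k)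
  obtain ⟨hs1, hc1⟩ := trig_facts k hk3
  rw [trig_shared k m hk3 (by omega) (by omega)]
  set RR := ∑ j ∈ range m, Real.cos ((j+1) * (4*π/k)) with hRR
  have htel := sum_cos_tel (4*π/k) m
  have h2k : (4*π/(k:ℝ))/2 = 2*π/k := by ring
  have harg : ((2*(m:ℝ)+1) * (4*π/k))/2 = π + π/k := by
    subst hB
    push_cast
    have hne : ((4:ℝ)*m+1) ≠ 0 := by positivity
    field_simp
    ring
  rw [h2k] at htel
  rw [show (2*(m:ℕ)+1 : ℝ) * (4*π/k)/2 = ((2*(m:ℝ)+1) * (4*π/k))/2 by push_cast; ring] at htel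
  have hspa : Real.sin (π + π/(k:ℝ)) = -Real.sin (π/k) := by
    rw [Real.sin_add]; simp
  rw [harg, hspa] at htel
  have hs2 : Real.sin (2*π/k) = 2*Real.sin (π/k)*Real.cos (π/k) := by
    rw [show 2*π/(k:ℝ) = 2*(π/k) by ring, Real.sin_two_mul]
  rw [hs2] at htel
  have h4 : 4*Real.cos (π/k)*RR = -1 - 2*Real.cos (π/k) :=
    mul_left_cancel₀ (ne_of_gt hs1) (by linear_combination htel)
  have hc1' : Real.cos (π/k) ≠ 0 := ne_of_gt hc1
  have hinv : 1/Real.cos (π/(k:ℝ)) = -(4*RR + 2) := by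
    rw [div_eq_iff hc1']
    linear_combination h4
  have hkcast : (k:ℝ) = 4*m+1 := by rw [hB]; push_cast; ring
  rw [hinv, hkcast]
  ring
/-- For an odd cycle `C_k` (`k ≥ 3`),
`s⁺(C_k) − s⁻(C_k) = ±2(sec(π/k) − 1)` according to `k mod 4`. -/
theorem odd_cycle_square_energy (k : ℕ) (hk : 3 ≤ k) (hodd : Odd k) :
    (k % 4 = 3 → sPlus (SimpleGraph.cycleGraph k) - sMinus (SimpleGraph.cycleGraph k) =
      2 * (1 / Real.cos (π / k) - 1)) ∧
    (k % 4 = 1 → sPlus (SimpleGraph.cycleGraph k) - sMinus (SimpleGraph.cycleGraph k) =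
      -(2 * (1 / Real.cos (π / k) - 1))) := by
  obtain ⟨n, rfl⟩ : ∃ n, k = n + 2 := ⟨k - 2, by omega⟩
  have hdet : ∀ x : ℂ,
      ∏ i, (x - ((adjHerm (SimpleGraph.cycleGraph (n+2))).eigenvalues i : ℂ))
        = ∏ j : Fin (n+2), (x - ((lamR n j : ℝ) : ℂ)) := by
    intro x
    rw [← det_diag_eig (adjHerm (SimpleGraph.cycleGraph (n+2))) x, adj_map, cycle_det n hodd x]
  have htrans := sum_transfer (adjHerm (SimpleGraph.cycleGraph (n+2))).eigenvalues
    (fun j : Fin (n+2) => lamR n j.val) hdet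
    (fun t => (if 0 < t then t^2 else 0) - (if t < 0 then t^2 else 0))
  have hsm : sPlus (SimpleGraph.cycleGraph (n+2)) - sMinus (SimpleGraph.cycleGraph (n+2))
      = ∑ j ∈ Finset.range (n+2),
        ((if 0 < lamR n j then (lamR n j)^2 else 0) - (if lamR n j < 0 then (lamR n j)^2 else 0)) := by
    rw [sPlus, sMinus, ← Finset.sum_sub_distrib]
    rw [htrans]
    exact Fin.sum_univ_eq_sum_range
      (fun j => (if 0 < lamR n j then (lamR n j)^2 else 0) - (if lamR n j < 0 then (lamR n j)^2 else 0)) (n+2)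
  constructor
  · intro h3
    obtain ⟨m, hm⟩ : ∃ m, n + 2 = 4*m+3 := ⟨(n-1)/4, by omega⟩
    rw [hsm]
    have := trig_caseA (n+2) m hm
    push_cast at this ⊢
    simp only [lamR]
    convert this using 2
    rfl
  · intro h1
    obtain ⟨m, hm⟩ : ∃ m, n + 2 = 4*m+1 := ⟨(n+1)/4, by omega⟩
    have hm1 : 1 ≤ m := by omega
    rw [hsm]
    have := trig_caseB (n+2) m hm hm1
    push_cast at this ⊢
    simp only [lamR]
    convert this using 2
    rfl
end

section
/- Let λ₁,…,λₙ be real numbers with ∑ᵢ λᵢ = 0, and Θ(t) = ∑ᵢ arctan(λᵢ/t) for t > 0. If Θ(t) > 0 for all t > 0, then ∑ᵢ λᵢ·|λᵢ| < 0; if Θ(t) < 0 for all t > 0, then ∑ᵢ λᵢ·|λᵢ| > 0. -/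
open Real Filter Topology

/-- Cubic bound: `|arctan x - x| ≤ |x|^3`. -/
lemma arctan_sub_self_abs_le (x : ℝ) : |arctan x - x| ≤ |x|^3 := by
  have key : ∀ y : ℝ, 0 ≤ y → arctan y ≤ y ∧ y - y^3/3 ≤ arctan y := by
    intro y hy
    have hg : Monotone (fun x : ℝ => x - arctan x) := by
      apply monotone_of_deriv_nonneg
      · exact differentiable_id.sub Real.differentiable_arctan
      · intro x
        have h : HasDerivAt (fun x : ℝ => x - arctan x) (1 - 1/(1+x^2)) x :=
          (hasDerivAt_id x).sub (Real.hasDerivAt_arctan x)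
        rw [h.deriv]
        have h1 : (0:ℝ) < 1 + x^2 := by positivity
        rw [sub_nonneg, div_le_one h1]; nlinarith
    have hh : Monotone (fun x : ℝ => arctan x - x + x^3/3) := by
      apply monotone_of_deriv_nonneg
      · exact (Real.differentiable_arctan.sub differentiable_id).add
          ((differentiable_id.pow 3).div_const 3)
      · intro x
        have h : HasDerivAt (fun x : ℝ => arctan x - x + x^3/3)
            (1/(1+x^2) - 1 + (3*x^2)/3) x := by
          exact ((Real.hasDerivAt_arctan x).sub (hasDerivAt_id x)).add
            (((hasDerivAt_pow 3 x).div_const 3).congr_deriv (by norm_num))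
        rw [h.deriv]
        have h1 : (0:ℝ) < 1 + x^2 := by positivity
        have h2 : (1:ℝ) - x^2 ≤ 1/(1+x^2) := by
          rw [le_div_iff₀ h1]; nlinarith
        nlinarith
    constructor
    · have := hg hy; simpa using this
    · have := hh hy; simp at this; nlinarith [this]
  rcases le_or_gt 0 x with hx | hx
  · obtain ⟨h1, h2⟩ := key x hx
    rw [abs_of_nonpos (by linarith), abs_of_nonneg hx]
    nlinarith [pow_nonneg hx 3]
  · obtain ⟨h1, h2⟩ := key (-x) (by linarith)
    rw [Real.arctan_neg] at h1 h2
    rw [abs_of_nonneg (by nlinarith), abs_of_neg hx]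
    nlinarith

lemma abs_arctan_le (x : ℝ) : |arctan x| ≤ π/2 :=
  abs_le.mpr ⟨(Real.neg_pi_div_two_lt_arctan _).le, (Real.arctan_lt_pi_div_two _).le⟩

/-- Antiderivative of `t ↦ t * arctan (c / t)` on `(0, ∞)`. -/
noncomputable def Fa (c t : ℝ) : ℝ := t^2/2 * arctan (c/t) + c*t/2 - c^2/2 * arctan (t/c)

lemma Fa_hasDerivAt (c : ℝ) {t : ℝ} (ht : t ≠ 0) :
    HasDerivAt (Fa c) (t * arctan (c/t)) t := by
  rcases eq_or_ne c 0 with rfl | hc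
  · have : Fa 0 = fun _ => (0:ℝ) := by funext s; simp [Fa]
    rw [this]
    simpa using (hasDerivAt_const t (0:ℝ))
  · have h1 : HasDerivAt (fun s : ℝ => c / s) (c * (-(t^2)⁻¹)) t := by
      simpa [div_eq_mul_inv] using (hasDerivAt_inv ht).const_mul c
    have h2 : HasDerivAt (fun s : ℝ => arctan (c / s))
        (1/(1+(c/t)^2) * (c * (-(t^2)⁻¹))) t := (Real.hasDerivAt_arctan (c/t)).comp t h1
    have h3 : HasDerivAt (fun s : ℝ => s^2/2) t t := by
      simpa using (hasDerivAt_pow 2 t).div_const 2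
    have h4 := h3.mul h2
    have h5 : HasDerivAt (fun s : ℝ => c*s/2) (c/2) t := by
      simpa using ((hasDerivAt_id t).const_mul c).div_const 2
    have h6 : HasDerivAt (fun s : ℝ => arctan (s / c)) (1/(1+(t/c)^2) * (1/c)) t := by
      have := (Real.hasDerivAt_arctan (t/c)).comp t ((hasDerivAt_id t).div_const c)
      simpa [Function.comp_def] using this
    have h7 := h6.const_mul (c^2/2)
    have htot := (h4.add h5).sub h7
    refine htot.congr_deriv ?_
    have hden : (1:ℝ) + (c/t)^2 ≠ 0 := by positivity
    have hden2 : (1:ℝ) + (t/c)^2 ≠ 0 := by positivity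
    have hs : t^2 + c^2 ≠ 0 := by positivity
    field_simp
    ring

lemma Fa_tendsto_zero (c : ℝ) : Tendsto (Fa c) (𝓝[>] (0:ℝ)) (𝓝 0) := by
  have h1 : Tendsto (fun t : ℝ => t^2/2 * arctan (c/t)) (𝓝[>] (0:ℝ)) (𝓝 0) := by
    apply squeeze_zero_norm (a := fun t : ℝ => t^2/2 * (π/2))
    · intro t
      rw [Real.norm_eq_abs, abs_mul, abs_of_nonneg (show (0:ℝ) ≤ t^2/2 by positivity)]
      exact mul_le_mul_of_nonneg_left (abs_arctan_le _) (by positivity)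
    · have : Tendsto (fun t : ℝ => t^2/2 * (π/2)) (𝓝 (0:ℝ)) (𝓝 (0^2/2 * (π/2))) :=
        Tendsto.mul_const _ ((continuous_pow 2).tendsto 0 |>.div_const 2)
      simpa using this.mono_left nhdsWithin_le_nhds
  have h2 : Tendsto (fun t : ℝ => c*t/2 - c^2/2 * arctan (t/c)) (𝓝[>] (0:ℝ))
      (𝓝 (c*0/2 - c^2/2 * arctan (0/c))) := by
    apply Tendsto.mono_left _ nhdsWithin_le_nhds
    exact Tendsto.sub (((continuous_const.mul continuous_id).div_const 2).tendsto 0)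
      (((Real.continuous_arctan.comp (continuous_id.div_const c)).tendsto 0).const_mul _)
  have h := h1.add h2
  simp only [zero_div, Real.arctan_zero, mul_zero, zero_mul, sub_zero, zero_add, add_zero] at h
  exact h.congr (fun t => by simp [Fa]; ring)

lemma Fa_tendsto_atTop (c : ℝ) :
    Tendsto (fun t => Fa c t - c*t) atTop (𝓝 (-(π/4 * (c * |c|)))) := by
  have T1 : Tendsto (fun t : ℝ => t^2/2 * arctan (c/t) - c*t/2) atTop (𝓝 0) := by
    apply squeeze_zero_norm' (a := fun t : ℝ => |c|^3/2 * t⁻¹)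
    · filter_upwards [eventually_gt_atTop (0:ℝ)] with t ht
      have ht' : t ≠ 0 := ne_of_gt ht
      have heq : t^2/2 * arctan (c/t) - c*t/2 = t^2/2 * (arctan (c/t) - c/t) := by
        field_simp
      rw [Real.norm_eq_abs, heq, abs_mul,
        abs_of_nonneg (by positivity : (0:ℝ) ≤ t^2/2)]
      calc t^2/2 * |arctan (c/t) - c/t| ≤ t^2/2 * |c/t|^3 := by
            gcongr; exact arctan_sub_self_abs_le _
        _ = |c|^3/2 * t⁻¹ := by
            rw [abs_div, abs_of_pos ht]; field_simp
    · have h := tendsto_inv_atTop_zero.const_mul (|c|^3/2)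
      rw [mul_zero] at h; exact h
  have T2 : Tendsto (fun t : ℝ => c^2/2 * arctan (t/c)) atTop (𝓝 (π/4 * (c * |c|))) := by
    rcases lt_trichotomy c 0 with hc | rfl | hc
    · have hdiv : Tendsto (fun t : ℝ => t / c) atTop atBot :=
        tendsto_id.atTop_div_const_of_neg hc
      have h := ((Real.tendsto_arctan_atBot.mono_right nhdsWithin_le_nhds).comp hdiv).const_mul
        (c^2/2)
      convert h using 2
      · rfl
      rw [abs_of_neg hc]; ring
    · simpa using tendsto_const_nhds (α := ℝ) (f := atTop) (x := (0:ℝ))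
    · have hdiv : Tendsto (fun t : ℝ => t / c) atTop atTop :=
        tendsto_id.atTop_div_const hc
      have h := ((Real.tendsto_arctan_atTop.mono_right nhdsWithin_le_nhds).comp hdiv).const_mul
        (c^2/2)
      convert h using 2
      · rfl
      rw [abs_of_pos hc]; ring
  have h := T1.sub T2
  rw [zero_sub] at h
  exact h.congr (fun t => by simp [Fa]; ring)

/-- One-sided version: `Θ > 0` on `(0,∞)` forces `∑ λ|λ| < 0`. -/
lemma aux_sign {n : ℕ} (l : Fin n → ℝ) (hsum : ∑ i, l i = 0)
    (hpos : ∀ t : ℝ, 0 < t → 0 < ∑ i, arctan (l i / t)) : ∑ i, l i * |l i| < 0 := by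
  set H : ℝ → ℝ := fun t => ∑ i, Fa (l i) t with hHdef
  have hderiv : ∀ t : ℝ, 0 < t → HasDerivAt H (t * ∑ i, arctan (l i / t)) t := by
    intro t ht
    have := HasDerivAt.fun_sum (u := Finset.univ) (fun (i : Fin n) _ => Fa_hasDerivAt (l i) (ne_of_gt ht))
    rwa [← Finset.mul_sum] at this
  have hmono : StrictMonoOn H (Set.Ioi 0) := by
    apply strictMonoOn_of_deriv_pos (convex_Ioi 0)
    · exact fun x hx => ((hderiv x hx).continuousAt).continuousWithinAt
    · intro x hx
      rw [interior_Ioi] at hx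
      rw [(hderiv x hx).deriv]
      exact mul_pos hx (hpos x hx)
  have h0 : Tendsto H (𝓝[>] (0:ℝ)) (𝓝 0) := by
    have := tendsto_finset_sum Finset.univ (fun (i : Fin n) _ => Fa_tendsto_zero (l i))
    simpa using this
  have hinf : Tendsto H atTop (𝓝 (∑ i, -(π/4 * (l i * |l i|)))) := by
    have h := tendsto_finset_sum Finset.univ (fun (i : Fin n) _ => Fa_tendsto_atTop (l i))
    apply h.congr
    intro t
    rw [Finset.sum_sub_distrib, ← Finset.sum_mul, hsum, zero_mul, sub_zero]
  have h1 : (0:ℝ) ≤ H 1 := by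
    refine le_of_tendsto h0 ?_
    filter_upwards [Ioo_mem_nhdsGT_of_mem (⟨le_refl (0:ℝ), one_pos⟩ : (0:ℝ) ∈ Set.Ico 0 1)]
      with t ht
    exact (hmono ht.1 (by norm_num) ht.2).le
  have h2 : H 1 < H 2 := hmono (by norm_num) (by norm_num) (by norm_num)
  have h3 : H 2 ≤ ∑ i, -(π/4 * (l i * |l i|)) := by
    refine ge_of_tendsto hinf ?_
    filter_upwards [eventually_ge_atTop (3:ℝ)] with t ht
    exact (hmono (by norm_num) (show t ∈ Set.Ioi (0:ℝ) by simp; linarith) (by linarith)).le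
  have hL : 0 < ∑ i, -(π/4 * (l i * |l i|)) := lt_of_lt_of_le (lt_of_le_of_lt h1 h2) h3
  have heq : ∑ i, -(π/4 * (l i * |l i|)) = -(π/4 * ∑ i, l i * |l i|) := by
    rw [Finset.mul_sum]
    exact Finset.sum_neg_distrib _
  rw [heq] at hL
  nlinarith [Real.pi_pos]

/-- If `∑ i, λ i = 0` and `Θ(t) = ∑ i, arctan (λ i / t)` for `t > 0`, then a strict sign of
`Θ` on `(0, ∞)` forces the opposite strict sign of `∑ i, λ i * |λ i|`. -/
theorem sign_from_theta {n : ℕ} (l : Fin n → ℝ) (hsum : ∑ i, l i = 0) :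
    ((∀ t : ℝ, 0 < t → 0 < ∑ i, arctan (l i / t)) → ∑ i, l i * |l i| < 0) ∧
    ((∀ t : ℝ, 0 < t → ∑ i, arctan (l i / t) < 0) → 0 < ∑ i, l i * |l i|) := by
  constructor
  · exact aux_sign l hsum
  · intro h
    have key := aux_sign (fun i => -(l i)) (by simp [hsum]) (fun t ht => by
      simp only [neg_div, Real.arctan_neg, Finset.sum_neg_distrib]
      linarith [h t ht])
    simp only [abs_neg, neg_mul, Finset.sum_neg_distrib] at key
    linarith
end
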